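/- Let q = p^h with p > 3 prime, let m be a divisor of q − 1, and let t ∈ F_q^*. Let (a,b) ∈ F_q² with a·b ≠ (a−1)³. Then (a,b) is collinear with two distinct points of K_t if and only if there exist x̃, ỹ ∈ F_q^* with x̃^m ≠ ỹ^m such that f_{a,b,t,m}(x̃, ỹ) = 0. -/

import Mathlib

/-- The coset `K_t` of the group of nonsingular points of the nodal cubic `XY = (X-1)³`. -/
def Kt (F : Type*) [Field F] (t : F) (m : ℕ) : Set (F × F) :=
  {P | ∃ w : F, w ≠ 0 ∧ P = (t * w ^ m, (t * w ^ m - 1) ^ 3 / (t * w ^ m))}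

/-- The value of the polynomial `f_{a,b,t,m}` at `(x, y)`. -/
def fval {F : Type*} [Field F] (a b t : F) (m : ℕ) (x y : F) : F :=
  a * (t ^ 3 * x ^ (2 * m) * y ^ m + t ^ 3 * x ^ m * y ^ (2 * m)
      - 3 * t ^ 2 * x ^ m * y ^ m + 1)
    - b * t ^ 2 * x ^ m * y ^ m - t ^ 4 * x ^ (2 * m) * y ^ (2 * m)
    + 3 * t ^ 2 * x ^ m * y ^ m - t * x ^ m - t * y ^ m

/-- Determinant criterion for collinearity of three points in the plane `F × F`,
when the last two points are distinct. -/
lemma collinear_triple_iff_det {F : Type*} [Field F] (A B C : F × F) (hBC : B ≠ C) :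
    Collinear F ({A, B, C} : Set (F × F)) ↔
      (B.1 - A.1) * (C.2 - A.2) - (C.1 - A.1) * (B.2 - A.2) = 0 := by
  constructor
  · intro hcol
    have hB : B ∈ ({A, B, C} : Set (F × F)) := by simp
    rw [collinear_iff_of_mem hB] at hcol
    obtain ⟨v, hv⟩ := hcol
    obtain ⟨cA, hA⟩ := hv A (by simp)
    obtain ⟨cC, hC⟩ := hv C (by simp)
    have hA1 : A.1 = cA * v.1 + B.1 := by rw [hA]; rfl
    have hA2 : A.2 = cA * v.2 + B.2 := by rw [hA]; rfl
    have hC1 : C.1 = cC * v.1 + B.1 := by rw [hC]; rfl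
    have hC2 : C.2 = cC * v.2 + B.2 := by rw [hC]; rfl
    rw [hA1, hA2, hC1, hC2]
    ring
  · intro hdet
    have hB : B ∈ ({A, B, C} : Set (F × F)) := by simp
    rw [collinear_iff_of_mem hB]
    refine ⟨C - B, ?_⟩
    have hAc : ∃ c : F, A = c • (C - B) +ᵥ B := by
      have hdet' : (A.1 - B.1) * (C.2 - B.2) = (C.1 - B.1) * (A.2 - B.2) := by
        linear_combination -hdet
      by_cases h1 : C.1 - B.1 ≠ 0
      · refine ⟨(A.1 - B.1) / (C.1 - B.1), ?_⟩
        have h2 : A.2 - B.2 = (A.1 - B.1) / (C.1 - B.1) * (C.2 - B.2) := by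
          field_simp
          linear_combination -hdet'
        apply Prod.ext
        · show A.1 = (A.1 - B.1) / (C.1 - B.1) * (C.1 - B.1) + B.1
          field_simp; ring
        · show A.2 = (A.1 - B.1) / (C.1 - B.1) * (C.2 - B.2) + B.2
          rw [← h2]; ring
      · push_neg at h1
        have h2 : C.2 - B.2 ≠ 0 := by
          intro h2
          exact hBC (Prod.ext (sub_eq_zero.mp h1).symm (sub_eq_zero.mp h2).symm)
        refine ⟨(A.2 - B.2) / (C.2 - B.2), ?_⟩
        have h3 : A.1 = B.1 := by
          rw [h1, zero_mul] at hdet'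
          rcases mul_eq_zero.mp hdet' with hc | hc
          · exact sub_eq_zero.mp hc
          · exact absurd hc h2
        apply Prod.ext
        · show A.1 = (A.2 - B.2) / (C.2 - B.2) * (C.1 - B.1) + B.1
          rw [h1, h3]; ring
        · show A.2 = (A.2 - B.2) / (C.2 - B.2) * (C.2 - B.2) + B.2
          field_simp; ring
    intro P hP
    rcases hP with rfl | rfl | rfl
    · exact hAc
    · exact ⟨0, by apply Prod.ext <;> simp⟩
    · exact ⟨1, by apply Prod.ext <;> simp⟩

/-- Key algebraic equivalence. -/
lemma key_iff {F : Type*} [Field F] (a b u v : F) (hu : u ≠ 0) (hv : v ≠ 0)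
    (huv : u ≠ v) :
    ((u - a) * ((v - 1) ^ 3 / v - b) - (v - a) * ((u - 1) ^ 3 / u - b) = 0) ↔
      (a * (u ^ 2 * v + u * v ^ 2 - 3 * (u * v) + 1) - b * (u * v)
        - u ^ 2 * v ^ 2 + 3 * (u * v) - u - v = 0) := by
  have hkey : ((u - a) * ((v - 1) ^ 3 / v - b) - (v - a) * ((u - 1) ^ 3 / u - b)) * (u * v)
      = (a * (u ^ 2 * v + u * v ^ 2 - 3 * (u * v) + 1) - b * (u * v)
        - u ^ 2 * v ^ 2 + 3 * (u * v) - u - v) * (u - v) := by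
    field_simp
    ring
  have huv' : u - v ≠ 0 := sub_ne_zero.mpr huv
  have huvne : u * v ≠ 0 := mul_ne_zero hu hv
  constructor
  · intro h
    rw [h, zero_mul] at hkey
    exact (mul_eq_zero.mp hkey.symm).resolve_right huv'
  · intro h
    rw [h, zero_mul] at hkey
    exact (mul_eq_zero.mp hkey).resolve_right huvne

/-- Rewriting `fval` in terms of `u = t x^m`, `v = t y^m`. -/
lemma fval_eq {F : Type*} [Field F] (a b t : F) (m : ℕ) (x y : F) :
    fval a b t m x y
      = a * ((t * x ^ m) ^ 2 * (t * y ^ m) + (t * x ^ m) * (t * y ^ m) ^ 2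
          - 3 * ((t * x ^ m) * (t * y ^ m)) + 1)
        - b * ((t * x ^ m) * (t * y ^ m)) - (t * x ^ m) ^ 2 * (t * y ^ m) ^ 2
        + 3 * ((t * x ^ m) * (t * y ^ m)) - (t * x ^ m) - (t * y ^ m) := by
  unfold fval
  rw [two_mul, pow_add, pow_add]
  ring

theorem statement_8 (p h q : ℕ) (hp : p.Prime) (hp3 : 3 < p) (hh : 0 < h)
    (hq : q = p ^ h)
    (F : Type) [Field F] [Fintype F] (hcard : Fintype.card F = q)
    (m : ℕ) (hdvd : m ∣ q - 1)
    (t : F) (ht : t ≠ 0)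
    (a b : F) (hab : a * b ≠ (a - 1) ^ 3) :
    (∃ P₁ ∈ Kt F t m, ∃ P₂ ∈ Kt F t m, P₁ ≠ P₂ ∧
        Collinear F ({(a, b), P₁, P₂} : Set (F × F))) ↔
      ∃ x y : F, x ≠ 0 ∧ y ≠ 0 ∧ x ^ m ≠ y ^ m ∧ fval a b t m x y = 0 := by
  constructor
  · rintro ⟨P₁, ⟨w₁, hw₁, hP₁⟩, P₂, ⟨w₂, hw₂, hP₂⟩, hne, hcol⟩
    set u : F := t * w₁ ^ m with hu_def
    set v : F := t * w₂ ^ m with hv_def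
    have hu : u ≠ 0 := mul_ne_zero ht (pow_ne_zero m hw₁)
    have hv : v ≠ 0 := mul_ne_zero ht (pow_ne_zero m hw₂)
    have huv : u ≠ v := by
      intro hcontra
      apply hne
      rw [hP₁, hP₂, hcontra]
    refine ⟨w₁, w₂, hw₁, hw₂, ?_, ?_⟩
    · intro hcontra
      exact huv (by rw [hu_def, hv_def, hcontra])
    · subst hP₁ hP₂
      rw [collinear_triple_iff_det _ _ _ hne] at hcol
      simp only at hcol
      have hdet : (u - a) * ((v - 1) ^ 3 / v - b) - (v - a) * ((u - 1) ^ 3 / u - b) = 0 := hcol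
      rw [fval_eq]
      exact (key_iff a b u v hu hv huv).mp hdet
  · rintro ⟨x, y, hx, hy, hxy, hf⟩
    set u : F := t * x ^ m with hu_def
    set v : F := t * y ^ m with hv_def
    have hu : u ≠ 0 := mul_ne_zero ht (pow_ne_zero m hx)
    have hv : v ≠ 0 := mul_ne_zero ht (pow_ne_zero m hy)
    have huv : u ≠ v := by
      intro hcontra
      apply hxy
      rw [hu_def, hv_def] at hcontra
      exact mul_left_cancel₀ ht hcontra
    refine ⟨(u, (u - 1) ^ 3 / u), ⟨x, hx, rfl⟩, (v, (v - 1) ^ 3 / v), ⟨y, hy, rfl⟩, ?_, ?_⟩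
    · intro hcontra
      exact huv (congrArg Prod.fst hcontra)
    · rw [collinear_triple_iff_det]
      · show (u - a) * ((v - 1) ^ 3 / v - b) - (v - a) * ((u - 1) ^ 3 / u - b) = 0
        rw [fval_eq] at hf
        exact (key_iff a b u v hu hv huv).mpr hf
      · intro hcontra
        exact huv (congrArg Prod.fst hcontra)
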